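/- Let F_{n,k} denote the set of Frobenius seaweed data (a|b) for sp_{2n} (up to swapping a and b) whose type-C meander graph has exactly k central arcs. For every n ≥ 1 and k ≥ 1 there is an injective map from F_{n,k} into F_{n+1,k+1}. -/

import Mathlib

/-- The arc of a block starting at offset `o` of size `m`: the `k`-th nested arc
joins vertices `o+k` and `o+(m-1-k)` (0-based), for `2k+1 < m`. -/
def inBlockArc (o m i j : ℕ) : Prop :=
  ∃ k : ℕ, 2 * k + 1 < m ∧ i = o + k ∧ j = o + (m - 1 - k)

/-- Arcs determined by a composition, drawn block by block starting at offset `o`. -/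
def arcs : List ℕ → ℕ → ℕ → ℕ → Prop
  | [], _, _, _ => False
  | m :: rest, o, i, j => inBlockArc o m i j ∨ arcs rest (o + m) i j

/-- The type-A meander graph of the pair of compositions `(a | b)` on `n` vertices
(0-based): arcs of `a` above the line, arcs of `b` below. -/
def meanderA (n : ℕ) (a b : List ℕ) : SimpleGraph (Fin n) where
  Adj i j := i ≠ j ∧ (arcs a 0 i.val j.val ∨ arcs a 0 j.val i.val ∨
      arcs b 0 i.val j.val ∨ arcs b 0 j.val i.val)
  symm := by
    constructor
    intro i j h
    exact ⟨Ne.symm h.1, by tauto⟩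
  loopless := by
    constructor
    intro i h
    exact h.1 rfl

/-- The symmetric composition `(a₁,…,a_s, 2d, a_s,…,a₁)` of `2n`, where
`d = n - Σ aᵢ` (a zero middle part is omitted). -/
def tildeComp (n : ℕ) (a : List ℕ) : List ℕ :=
  (a ++ [2 * (n - a.sum)] ++ a.reverse).filter (fun x => x != 0)

/-- The type-C meander graph `Γ^C_n(a|b)` on `2n` vertices. -/
def meanderC (n : ℕ) (a b : List ℕ) : SimpleGraph (Fin (2 * n)) :=
  meanderA (2 * n) (tildeComp n a) (tildeComp n b)

/-- The reflection `σ` sending vertex `i` to `2n + 1 - i` (0-based: `i ↦ 2n - 1 - i`). -/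
def sigmaRefl (n : ℕ) : Fin (2 * n) → Fin (2 * n) :=
  fun i => ⟨2 * n - 1 - i.val, by have := i.isLt; omega⟩

/-- A connected component is a cycle if every vertex in it has degree 2. -/
def IsCycleComp {V : Type*} (G : SimpleGraph V) (c : G.ConnectedComponent) : Prop :=
  ∀ v, G.connectedComponentMk v = c → (G.neighborSet v).ncard = 2

/-- A connected component is a segment if it is not a cycle. -/
def IsSegmentComp {V : Type*} (G : SimpleGraph V) (c : G.ConnectedComponent) : Prop :=
  ¬ IsCycleComp G c

/-- The number of cycles of a graph. -/
noncomputable def numCycles {V : Type*} (G : SimpleGraph V) : ℕ :=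
  {c : G.ConnectedComponent | IsCycleComp G c}.ncard

/-- The number of segments of a graph. -/
noncomputable def numSegments {V : Type*} (G : SimpleGraph V) : ℕ :=
  {c : G.ConnectedComponent | IsSegmentComp G c}.ncard

/-- A component of a type-C meander graph is `σ`-stable if `σ` maps it to itself. -/
def SigmaStable (n : ℕ) (G : SimpleGraph (Fin (2 * n))) (c : G.ConnectedComponent) : Prop :=
  ∀ v, G.connectedComponentMk v = c → G.connectedComponentMk (sigmaRefl n v) = c

/-- The number of non-`σ`-stable segments of `Γ^C_n(a|b)`. -/
noncomputable def numNonStableSegments (n : ℕ) (a b : List ℕ) : ℕ :=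
  {c : (meanderC n a b).ConnectedComponent |
    IsSegmentComp (meanderC n a b) c ∧ ¬ SigmaStable n (meanderC n a b) c}.ncard

/-- The topological index `T_n(a|b)` of `Γ^C_n(a|b)`:
(number of cycles) + ½·(number of non-`σ`-stable segments). -/
noncomputable def topIndex (n : ℕ) (a b : List ℕ) : ℚ :=
  (numCycles (meanderC n a b) : ℚ) + (numNonStableSegments n a b : ℚ) / 2

/-- A composition: all parts are positive. -/
def IsComposition (a : List ℕ) : Prop := ∀ x ∈ a, 0 < x

/-- A Frobenius seaweed datum for `sp_{2n}` whose meander graph has `k` central arcs: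
one of the compositions sums to `n`, the other to `n - k`, and `T_n(a|b) = 0`. -/
def FrobDatum (n k : ℕ) (a b : List ℕ) : Prop :=
  IsComposition a ∧ IsComposition b ∧ 1 ≤ k ∧ k ≤ n ∧
    ((a.sum = n - k ∧ b.sum = n) ∨ (b.sum = n - k ∧ a.sum = n)) ∧
    topIndex n a b = 0

/-- Frobenius seaweed data with `k` central arcs, up to swapping the two compositions. -/
def FSet (n k : ℕ) : Set (Sym2 (List ℕ)) :=
  {s | ∃ a b, s = s(a, b) ∧ FrobDatum n k a b}

/-- The number `F_{n,k}` of Frobenius seaweed data with `k` central arcs, up to swap. -/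
noncomputable def Fcount (n k : ℕ) : ℕ := (FSet n k).ncard


open SimpleGraph




lemma arcs_append (l1 l2 : List ℕ) (o i j : ℕ) :
    arcs (l1 ++ l2) o i j ↔ arcs l1 o i j ∨ arcs l2 (o + l1.sum) i j := by
  induction l1 generalizing o with
  | nil => simp [arcs]
  | cons m rest ih =>
      simp only [List.cons_append, arcs, List.sum_cons, Nat.add_assoc]
      rw [ih, ← Nat.add_assoc, or_assoc]

lemma arcs_bounds {l : List ℕ} {o i j : ℕ} (h : arcs l o i j) :
    o ≤ i ∧ i < j ∧ j < o + l.sum := by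
  induction l generalizing o with
  | nil => exact absurd h id
  | cons m rest ih =>
      rcases h with ⟨k, hk, hi, hj⟩ | h
      · subst hi hj; simp only [List.sum_cons]; omega
      · have := ih h; simp only [List.sum_cons]; omega

lemma arcs_shift {l : List ℕ} {o c i j : ℕ} :
    arcs l (o + c) (i + c) (j + c) ↔ arcs l o i j := by
  induction l generalizing o with
  | nil => simp [arcs]
  | cons m rest ih =>
      simp only [arcs]
      constructor
      · rintro (⟨k, hk, hi, hj⟩ | h)
        · exact Or.inl ⟨k, hk, by omega, by omega⟩
        · right; rw [show o + c + m = o + m + c by ring] at h; exact ih.mp h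
      · rintro (⟨k, hk, hi, hj⟩ | h)
        · exact Or.inl ⟨k, hk, by omega, by omega⟩
        · right; rw [show o + c + m = o + m + c by ring]; exact ih.mpr h

lemma arcs_shift' {l : List ℕ} {o c i j : ℕ} :
    arcs l (o + c) i j ↔ ∃ i' j', arcs l o i' j' ∧ i = i' + c ∧ j = j' + c := by
  constructor
  · intro h
    have hb := arcs_bounds h
    refine ⟨i - c, j - c, ?_, by omega, by omega⟩
    have : i - c + c = i := by omega
    have hj : j - c + c = j := by omega
    rw [← this, ← hj] at h
    exact arcs_shift.mp h
  · rintro ⟨i', j', h, rfl, rfl⟩; exact arcs_shift.mpr h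

lemma arcs_singleton (m o i j : ℕ) : arcs [m] o i j ↔ inBlockArc o m i j := by
  simp [arcs]



lemma filter_eq_self_of_comp {a : List ℕ} (ha : IsComposition a) :
    a.filter (fun x => x != 0) = a := by
  apply List.filter_eq_self.mpr
  intro x hx
  have := ha x hx
  simp; omega

lemma tildeComp_eq_pos {n : ℕ} {a : List ℕ} (ha : IsComposition a) (h : a.sum < n) :
    tildeComp n a = a ++ [2 * (n - a.sum)] ++ a.reverse := by
  have hrev : IsComposition a.reverse := by
    intro x hx; exact ha x (List.mem_reverse.mp hx)
  rw [tildeComp, List.filter_append, List.filter_append,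
    filter_eq_self_of_comp ha, filter_eq_self_of_comp hrev]
  congr 1
  simp; omega

lemma tildeComp_eq_full {n : ℕ} {a : List ℕ} (ha : IsComposition a) (h : a.sum = n) :
    tildeComp n a = a ++ a.reverse := by
  have hrev : IsComposition a.reverse := by
    intro x hx; exact ha x (List.mem_reverse.mp hx)
  rw [tildeComp, List.filter_append, List.filter_append,
    filter_eq_self_of_comp ha, filter_eq_self_of_comp hrev, h]
  simp

lemma inBlockArc_one (o i j : ℕ) : ¬ inBlockArc o 1 i j := by
  rintro ⟨t, ht, _, _⟩; omega

/-- `φ` on values. -/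
def phiN (n v : ℕ) : ℕ := if v < n then v else v + 2

lemma keyA {n k : ℕ} {a : List ℕ} (hk : 1 ≤ k) (has : a.sum + k = n) (i j : ℕ) :
    arcs (a ++ [2 * (k + 1)] ++ a.reverse) 0 i j ↔
      ((∃ i' j', arcs (a ++ [2 * k] ++ a.reverse) 0 i' j' ∧
        i = phiN n i' ∧ j = phiN n j') ∨ (i = n ∧ j = n + 1)) := by
  have hsum : a.reverse.sum = a.sum := List.sum_reverse a
  have hdecn : ∀ m i j, arcs (a ++ [m] ++ a.reverse) 0 i j ↔
      (arcs a 0 i j ∨ inBlockArc a.sum m i j ∨ arcs a.reverse (a.sum + m) i j) := by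
    intro m i j
    rw [arcs_append, arcs_append, arcs_singleton]
    simp [or_assoc]
  rw [hdecn]
  constructor
  · rintro (h | ⟨t, ht, rfl, rfl⟩ | h)
    · have hb := arcs_bounds h
      refine Or.inl ⟨i, j, ?_, ?_, ?_⟩
      · rw [hdecn]; exact Or.inl h
      · simp only [phiN]; rw [if_pos (by omega)]
      · simp only [phiN]; rw [if_pos (by omega)]
    · by_cases htk : t = k
      · subst htk; right; omega
      · left
        refine ⟨a.sum + t, a.sum + (2 * k - 1 - t), ?_, ?_, ?_⟩
        · rw [hdecn]; exact Or.inr (Or.inl ⟨t, by omega, rfl, rfl⟩)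
        · simp only [phiN]; rw [if_pos (by omega)]
        · simp only [phiN]; rw [if_neg (by omega)]; omega
    · rw [show a.sum + 2 * (k + 1) = (a.sum + 2 * k) + 2 by ring, arcs_shift'] at h
      obtain ⟨i', j', h, rfl, rfl⟩ := h
      have hb := arcs_bounds h
      refine Or.inl ⟨i', j', ?_, ?_, ?_⟩
      · rw [hdecn]; exact Or.inr (Or.inr h)
      · simp only [phiN]; rw [if_neg (by omega)]
      · simp only [phiN]; rw [if_neg (by omega)]
  · rintro (⟨i', j', h, rfl, rfl⟩ | ⟨rfl, rfl⟩)
    · rw [hdecn] at h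
      rcases h with h | ⟨t, ht, rfl, rfl⟩ | h
      · have hb := arcs_bounds h
        left
        simp only [phiN]; rw [if_pos (by omega), if_pos (by omega)]
        exact h
      · right; left
        refine ⟨t, by omega, ?_, ?_⟩
        · simp only [phiN]; rw [if_pos (by omega)]
        · simp only [phiN]; rw [if_neg (by omega)]; omega
      · have hb := arcs_bounds h
        right; right
        rw [show a.sum + 2 * (k + 1) = (a.sum + 2 * k) + 2 by ring, arcs_shift']
        refine ⟨i', j', h, ?_, ?_⟩
        · simp only [phiN]; rw [if_neg (by omega)]
        · simp only [phiN]; rw [if_neg (by omega)]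
    · right; left
      exact ⟨k, by omega, by omega, by omega⟩

lemma keyB {n : ℕ} {b : List ℕ} (hbs : b.sum = n) (i j : ℕ) :
    arcs ((b ++ [1]) ++ ([1] ++ b.reverse)) 0 i j ↔
      (∃ i' j', arcs (b ++ b.reverse) 0 i' j' ∧ i = phiN n i' ∧ j = phiN n j') := by
  have hsum : b.reverse.sum = b.sum := List.sum_reverse b
  rw [arcs_append, arcs_append, arcs_append, arcs_singleton, arcs_singleton]
  simp only [List.sum_append, List.sum_cons, List.sum_nil, hbs]
  constructor
  · rintro ((h | h) | (h | h))
    · have hb := arcs_bounds h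
      refine ⟨i, j, ?_, ?_, ?_⟩
      · rw [arcs_append]; exact Or.inl h
      · simp only [phiN]; rw [if_pos (by omega)]
      · simp only [phiN]; rw [if_pos (by omega)]
    · exact absurd h (inBlockArc_one _ _ _)
    · exact absurd h (inBlockArc_one _ _ _)
    · rw [show 0 + (n + (1 + 0)) + (1 + 0) = (0 + n) + 2 by ring, arcs_shift'] at h
      obtain ⟨i', j', h, rfl, rfl⟩ := h
      have hb := arcs_bounds h
      refine ⟨i', j', ?_, ?_, ?_⟩
      · rw [arcs_append, hbs]
        exact Or.inr (by rw [show 0+n = n from by omega] at h ⊢; exact h)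
      · simp only [phiN]; rw [if_neg (by omega)]
      · simp only [phiN]; rw [if_neg (by omega)]
  · rintro ⟨i', j', h, rfl, rfl⟩
    rw [arcs_append, hbs] at h
    rcases h with h | h
    · have hb := arcs_bounds h
      left; left
      simp only [phiN]; rw [if_pos (by omega), if_pos (by omega)]
      exact h
    · have hb := arcs_bounds h
      right; right
      rw [show 0 + (n + (1 + 0)) + (1 + 0) = (0 + n) + 2 by ring, arcs_shift']
      refine ⟨i', j', h, ?_, ?_⟩
      · simp only [phiN]; rw [if_neg (by omega)]
      · simp only [phiN]; rw [if_neg (by omega)]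





section general

variable {V V' : Type*} {G : SimpleGraph V} {G' : SimpleGraph V'} {φ : V → V'} {x y : V'}
  {σ : V → V} {σ' : V' → V'}

/-- All the data for the "add one σ-stable edge component" situation. -/
structure ExtData (G : SimpleGraph V) (G' : SimpleGraph V') (φ : V → V') (x y : V')
    (σ : V → V) (σ' : V' → V') : Prop where
  hφinj : Function.Injective φ
  hhom : ∀ u v, G.Adj u v → G'.Adj (φ u) (φ v)
  hback : ∀ u w, G'.Adj (φ u) w → ∃ v, w = φ v ∧ G.Adj u v
  hedge : G'.Adj x y
  hx : ∀ w, G'.Adj x w → w = y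
  hy : ∀ w, G'.Adj y w → w = x
  hφx : ∀ u, φ u ≠ x
  hφy : ∀ u, φ u ≠ y
  hcover : ∀ v', v' ≠ x → v' ≠ y → ∃ u, v' = φ u
  hcomm : ∀ u, σ' (φ u) = φ (σ u)
  hσx : σ' x = y
  hσy : σ' y = x

namespace ExtData

/-- the homomorphism -/
def hom (D : ExtData G G' φ x y σ σ') : G →g G' := ⟨φ, fun h => D.hhom _ _ h⟩

lemma reach_xy (D : ExtData G G' φ x y σ σ') : ∀ {v w : V'}, G'.Reachable v w → (v = x ∨ v = y) → (w = x ∨ w = y) := by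
  intro v w h hv
  obtain ⟨p⟩ := h
  induction p with
  | nil => exact hv
  | cons hadj q ih =>
      apply ih
      rcases hv with rfl | rfl
      · exact Or.inr (D.hx _ hadj)
      · exact Or.inl (D.hy _ hadj)

lemma walk_lift (D : ExtData G G' φ x y σ σ') : ∀ {s t : V'}, G'.Walk s t → ∀ u v, s = φ u → t = φ v → G.Reachable u v := by
  intro s t p
  induction p with
  | nil =>
      rintro u v rfl h
      exact (D.hφinj h) ▸ Reachable.refl u
  | @cons s b t hadj q ih =>
      rintro u v rfl rfl
      obtain ⟨u₁, rfl, hadj'⟩ := D.hback _ _ hadj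
      exact hadj'.reachable.trans (ih u₁ v rfl rfl)

lemma reach_phi (D : ExtData G G' φ x y σ σ') {u v : V} : G'.Reachable (φ u) (φ v) ↔ G.Reachable u v := by
  constructor
  · intro h; obtain ⟨p⟩ := h; exact D.walk_lift p u v rfl rfl
  · intro h; exact h.map D.hom

/-- the component of `x`. -/
def cx (D : ExtData G G' φ x y σ σ') : G'.ConnectedComponent := G'.connectedComponentMk x

lemma mem_cx (D : ExtData G G' φ x y σ σ') {v : V'} : G'.connectedComponentMk v = D.cx ↔ v = x ∨ v = y := by
  constructor
  · intro h
    have : G'.Reachable x v := (ConnectedComponent.eq.mp h).symm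
    exact D.reach_xy this (Or.inl rfl)
  · rintro (rfl | rfl)
    · rfl
    · exact ConnectedComponent.sound D.hedge.symm.reachable

/-- the component map. -/
def Φ (D : ExtData G G' φ x y σ σ') : G.ConnectedComponent → G'.ConnectedComponent := ConnectedComponent.map D.hom

lemma Φ_mk (D : ExtData G G' φ x y σ σ') (v : V) : D.Φ (G.connectedComponentMk v) = G'.connectedComponentMk (φ v) :=
  rfl

lemma Φ_inj (D : ExtData G G' φ x y σ σ') : Function.Injective D.Φ := by
  intro c d
  refine ConnectedComponent.ind₂ (fun u v h => ?_) c d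
  rw [D.Φ_mk, D.Φ_mk] at h
  exact ConnectedComponent.sound (D.reach_phi.mp (ConnectedComponent.eq.mp h))

lemma Φ_ne_cx (D : ExtData G G' φ x y σ σ') (c : G.ConnectedComponent) : D.Φ c ≠ D.cx := by
  refine ConnectedComponent.ind (fun u h => ?_) c
  rw [D.Φ_mk] at h
  rcases D.mem_cx.mp h with h' | h'
  · exact D.hφx u h'
  · exact D.hφy u h'

lemma Φ_surj_on (D : ExtData G G' φ x y σ σ') {c' : G'.ConnectedComponent} (h : c' ≠ D.cx) : ∃ c, D.Φ c = c' := by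
  revert h
  refine ConnectedComponent.ind (fun v h => ?_) c'
  have hvx : v ≠ x := fun hv => h (hv ▸ rfl)
  have hvy : v ≠ y := by
    rintro rfl
    exact h (ConnectedComponent.sound D.hedge.symm.reachable)
  obtain ⟨u, rfl⟩ := D.hcover v hvx hvy
  exact ⟨G.connectedComponentMk u, rfl⟩

lemma mem_Φ (D : ExtData G G' φ x y σ σ') {u : V} {w : V'} :
    G'.connectedComponentMk w = D.Φ (G.connectedComponentMk u) ↔
      ∃ v, w = φ v ∧ G.connectedComponentMk v = G.connectedComponentMk u := by
  rw [D.Φ_mk]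
  constructor
  · intro h
    have hwx : w ≠ x := by
      rintro rfl
      rcases D.reach_xy (ConnectedComponent.eq.mp h) (Or.inl rfl) with h' | h'
      · exact D.hφx u h'
      · exact D.hφy u h'
    have hwy : w ≠ y := by
      rintro rfl
      rcases D.reach_xy (ConnectedComponent.eq.mp h) (Or.inr rfl) with h' | h'
      · exact D.hφx u h'
      · exact D.hφy u h'
    obtain ⟨v, rfl⟩ := D.hcover w hwx hwy
    exact ⟨v, rfl, ConnectedComponent.sound (D.reach_phi.mp (ConnectedComponent.eq.mp h))⟩
  · rintro ⟨v, rfl, h⟩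
    exact ConnectedComponent.sound (D.reach_phi.mpr (ConnectedComponent.eq.mp h))

lemma neighborSet_phi (D : ExtData G G' φ x y σ σ') (v : V) : G'.neighborSet (φ v) = φ '' G.neighborSet v := by
  ext w
  simp only [mem_neighborSet, Set.mem_image]
  constructor
  · intro h
    obtain ⟨u, hu, hadj⟩ := D.hback _ _ h
    exact ⟨u, hadj, hu.symm⟩
  · rintro ⟨u, h, rfl⟩
    exact D.hhom _ _ h

lemma degree_phi (D : ExtData G G' φ x y σ σ') (v : V) : (G'.neighborSet (φ v)).ncard = (G.neighborSet v).ncard := by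
  rw [D.neighborSet_phi, Set.ncard_image_of_injective _ D.hφinj]

lemma cycle_iff (D : ExtData G G' φ x y σ σ') (c : G.ConnectedComponent) : IsCycleComp G' (D.Φ c) ↔ IsCycleComp G c := by
  refine ConnectedComponent.ind (fun u => ?_) c
  constructor
  · intro h v hv
    rw [← D.degree_phi]
    exact h (φ v) (D.mem_Φ.mpr ⟨v, rfl, hv⟩)
  · intro h w hw
    obtain ⟨v, rfl, hv⟩ := D.mem_Φ.mp hw
    rw [D.degree_phi]
    exact h v hv

lemma neighborSet_x (D : ExtData G G' φ x y σ σ') : G'.neighborSet x = {y} := by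
  ext w
  simp only [mem_neighborSet, Set.mem_singleton_iff]
  exact ⟨fun h => D.hx _ h, fun h => h ▸ D.hedge⟩

lemma cx_not_cycle (D : ExtData G G' φ x y σ σ') : ¬ IsCycleComp G' D.cx := by
  intro h
  have := h x rfl
  rw [D.neighborSet_x] at this
  simp at this

/-- stability property in the abstract. -/
def Stb {W : Type*} (H : SimpleGraph W) (τ : W → W) (c : H.ConnectedComponent) : Prop :=
  ∀ v, H.connectedComponentMk v = c → H.connectedComponentMk (τ v) = c

lemma stb_iff (D : ExtData G G' φ x y σ σ') (c : G.ConnectedComponent) : Stb G' σ' (D.Φ c) ↔ Stb G σ c := by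
  refine ConnectedComponent.ind (fun u => ?_) c
  constructor
  · intro h v hv
    have h1 : G'.connectedComponentMk (σ' (φ v)) = D.Φ (G.connectedComponentMk u) :=
      h (φ v) (D.mem_Φ.mpr ⟨v, rfl, hv⟩)
    rw [D.hcomm] at h1
    obtain ⟨v₂, hv2, h2⟩ := D.mem_Φ.mp h1
    rwa [D.hφinj hv2]
  · intro h w hw
    obtain ⟨v, rfl, hv⟩ := D.mem_Φ.mp hw
    rw [D.hcomm]
    exact D.mem_Φ.mpr ⟨σ v, rfl, h v hv⟩

lemma cx_stable (D : ExtData G G' φ x y σ σ') : Stb G' σ' D.cx := by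
  intro v hv
  rcases D.mem_cx.mp hv with rfl | rfl
  · rw [D.hσx]; exact D.mem_cx.mpr (Or.inr rfl)
  · rw [D.hσy]; exact D.mem_cx.mpr (Or.inl rfl)

lemma numCycles_eq (D : ExtData G G' φ x y σ σ') : numCycles G' = numCycles G := by
  have hset : {c' : G'.ConnectedComponent | IsCycleComp G' c'} =
      D.Φ '' {c : G.ConnectedComponent | IsCycleComp G c} := by
    ext c'
    simp only [Set.mem_setOf_eq, Set.mem_image]
    constructor
    · intro h
      have hne : c' ≠ D.cx := fun he => D.cx_not_cycle (he ▸ h)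
      obtain ⟨c, rfl⟩ := D.Φ_surj_on hne
      exact ⟨c, (D.cycle_iff c).mp h, rfl⟩
    · rintro ⟨c, hc, rfl⟩
      exact (D.cycle_iff c).mpr hc
  rw [numCycles, numCycles, hset, Set.ncard_image_of_injective _ D.Φ_inj]

lemma numNonStable_eq (D : ExtData G G' φ x y σ σ') :
    {c' : G'.ConnectedComponent | IsSegmentComp G' c' ∧ ¬ Stb G' σ' c'}.ncard =
    {c : G.ConnectedComponent | IsSegmentComp G c ∧ ¬ Stb G σ c}.ncard := by
  have hset : {c' : G'.ConnectedComponent | IsSegmentComp G' c' ∧ ¬ Stb G' σ' c'} =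
      D.Φ '' {c : G.ConnectedComponent | IsSegmentComp G c ∧ ¬ Stb G σ c} := by
    ext c'
    simp only [Set.mem_setOf_eq, Set.mem_image]
    constructor
    · rintro ⟨hseg, hnst⟩
      have hne : c' ≠ D.cx := fun he => hnst (he ▸ D.cx_stable)
      obtain ⟨c, rfl⟩ := D.Φ_surj_on hne
      exact ⟨c, ⟨fun h => hseg ((D.cycle_iff c).mpr h), fun h => hnst ((D.stb_iff c).mpr h)⟩, rfl⟩
    · rintro ⟨c, ⟨hseg, hnst⟩, rfl⟩
      exact ⟨fun h => hseg ((D.cycle_iff c).mp h), fun h => hnst ((D.stb_iff c).mp h)⟩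
  rw [hset, Set.ncard_image_of_injective _ D.Φ_inj]

end ExtData

end general
lemma meanderC_adj {n : ℕ} {a b : List ℕ} (u v : Fin (2 * n)) :
    (meanderC n a b).Adj u v ↔ u ≠ v ∧
      (arcs (tildeComp n a) 0 u.val v.val ∨ arcs (tildeComp n a) 0 v.val u.val ∨
       arcs (tildeComp n b) 0 u.val v.val ∨ arcs (tildeComp n b) 0 v.val u.val) :=
  Iff.rfl

section step

variable {n k : ℕ} {a b : List ℕ}

lemma coreAdj (hk : 1 ≤ k) (has : a.sum + k = n) (hbs : b.sum = n) (i j : ℕ) :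
    (arcs (a ++ [2 * (k + 1)] ++ a.reverse) 0 i j ∨
     arcs (a ++ [2 * (k + 1)] ++ a.reverse) 0 j i ∨
     arcs ((b ++ [1]) ++ ([1] ++ b.reverse)) 0 i j ∨
     arcs ((b ++ [1]) ++ ([1] ++ b.reverse)) 0 j i) ↔
    ((∃ i' j', i = phiN n i' ∧ j = phiN n j' ∧
        (arcs (a ++ [2 * k] ++ a.reverse) 0 i' j' ∨
         arcs (a ++ [2 * k] ++ a.reverse) 0 j' i' ∨
         arcs (b ++ b.reverse) 0 i' j' ∨
         arcs (b ++ b.reverse) 0 j' i')) ∨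
      (i = n ∧ j = n + 1) ∨ (i = n + 1 ∧ j = n)) := by
  rw [keyA hk has i j, keyA hk has j i, keyB hbs i j, keyB hbs j i]
  constructor
  · rintro ((⟨i', j', h, hi, hj⟩ | ⟨hi, hj⟩) | (⟨j', i', h, hj, hi⟩ | ⟨hj, hi⟩) |
      ⟨i', j', h, hi, hj⟩ | ⟨j', i', h, hj, hi⟩)
    · exact Or.inl ⟨i', j', hi, hj, Or.inl h⟩
    · exact Or.inr (Or.inl ⟨hi, hj⟩)
    · exact Or.inl ⟨i', j', hi, hj, Or.inr (Or.inl h)⟩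
    · exact Or.inr (Or.inr ⟨hi, hj⟩)
    · exact Or.inl ⟨i', j', hi, hj, Or.inr (Or.inr (Or.inl h))⟩
    · exact Or.inl ⟨i', j', hi, hj, Or.inr (Or.inr (Or.inr h))⟩
  · rintro (⟨i', j', hi, hj, (h | h | h | h)⟩ | ⟨rfl, rfl⟩ | ⟨rfl, rfl⟩)
    · exact Or.inl (Or.inl ⟨i', j', h, hi, hj⟩)
    · exact Or.inr (Or.inl (Or.inl ⟨j', i', h, hj, hi⟩))
    · exact Or.inr (Or.inr (Or.inl ⟨i', j', h, hi, hj⟩))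
    · exact Or.inr (Or.inr (Or.inr ⟨j', i', h, hj, hi⟩))
    · exact Or.inl (Or.inr ⟨rfl, rfl⟩)
    · exact Or.inr (Or.inl (Or.inr ⟨rfl, rfl⟩))

lemma sumA0 (has : a.sum + k = n) : (a ++ [2 * k] ++ a.reverse).sum = 2 * n := by
  simp only [List.sum_append, List.sum_cons, List.sum_nil, List.sum_reverse]
  omega

lemma sumB0 (hbs : b.sum = n) : (b ++ b.reverse).sum = 2 * n := by
  simp only [List.sum_append, List.sum_reverse]
  omega

lemma coreBound (has : a.sum + k = n) (hbs : b.sum = n) {i j : ℕ}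
    (h : arcs (a ++ [2 * k] ++ a.reverse) 0 i j ∨
         arcs (a ++ [2 * k] ++ a.reverse) 0 j i ∨
         arcs (b ++ b.reverse) 0 i j ∨
         arcs (b ++ b.reverse) 0 j i) : i < 2 * n ∧ j < 2 * n := by
  have hA : (a ++ [2 * k] ++ a.reverse).sum = 2 * n := sumA0 has
  have hB : (b ++ b.reverse).sum = 2 * n := sumB0 hbs
  rcases h with h | h | h | h <;> have hb := arcs_bounds h <;> omega

/-- The vertex embedding `Fin (2n) → Fin (2(n+1))`. -/
def phiF (n : ℕ) (v : Fin (2 * n)) : Fin (2 * (n + 1)) :=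
  ⟨phiN n v.val, by have := v.isLt; unfold phiN; split <;> omega⟩

lemma extData (hk : 1 ≤ k) (hkn : k ≤ n) (ha : IsComposition a) (hb : IsComposition b)
    (has : a.sum + k = n) (hbs : b.sum = n) :
    ExtData (meanderC n a b) (meanderC (n + 1) a (b ++ [1])) (phiF n)
      (⟨n, by omega⟩ : Fin (2 * (n + 1))) (⟨n + 1, by omega⟩ : Fin (2 * (n + 1)))
      (sigmaRefl n) (sigmaRefl (n + 1)) := by
  -- tildeComp computations
  have hb1 : IsComposition (b ++ [1]) := by
    intro x hx
    rcases List.mem_append.mp hx with h | h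
    · exact hb x h
    · simp at h; omega
  have hlt1 : a.sum < n := by omega
  have hlt2 : a.sum < n + 1 := by omega
  have hA1 : tildeComp (n + 1) a = a ++ [2 * (k + 1)] ++ a.reverse := by
    rw [tildeComp_eq_pos ha hlt2, show n + 1 - a.sum = k + 1 by omega]
  have hA0 : tildeComp n a = a ++ [2 * k] ++ a.reverse := by
    rw [tildeComp_eq_pos ha hlt1, show n - a.sum = k by omega]
  have hB0 : tildeComp n b = b ++ b.reverse := tildeComp_eq_full hb hbs
  have hB1 : tildeComp (n + 1) (b ++ [1]) = (b ++ [1]) ++ ([1] ++ b.reverse) := by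
    rw [tildeComp_eq_full hb1 (by simp [hbs])]
    congr 1
    simp
  -- the adjacency characterization at the level of Fin
  have adj_iff : ∀ u v : Fin (2 * (n + 1)),
      (meanderC (n + 1) a (b ++ [1])).Adj u v ↔
        ((∃ u' v' : Fin (2 * n), u = phiF n u' ∧ v = phiF n v' ∧ (meanderC n a b).Adj u' v') ∨
         (u.val = n ∧ v.val = n + 1) ∨ (u.val = n + 1 ∧ v.val = n)) := by
    intro u v
    rw [meanderC_adj, hA1, hB1, coreAdj hk has hbs]
    constructor
    · rintro ⟨hne, (⟨i', j', hi, hj, hcore⟩ | h | h)⟩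
      · obtain ⟨hi2, hj2⟩ := coreBound has hbs hcore
        refine Or.inl ⟨⟨i', hi2⟩, ⟨j', hj2⟩, ?_, ?_, ?_⟩
        · exact Fin.ext hi
        · exact Fin.ext hj
        · rw [meanderC_adj, hA0, hB0]
          refine ⟨?_, hcore⟩
          intro hcon
          apply hne
          apply Fin.ext
          rw [hi, hj]
          exact congrArg (fun w : Fin (2 * n) => phiN n w.val) hcon
      · exact Or.inr (Or.inl h)
      · exact Or.inr (Or.inr h)
    · rintro (⟨u', v', rfl, rfl, hadj⟩ | ⟨h1, h2⟩ | ⟨h1, h2⟩)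
      · rw [meanderC_adj, hA0, hB0] at hadj
        obtain ⟨hne, hcore⟩ := hadj
        refine ⟨?_, Or.inl ⟨u'.val, v'.val, rfl, rfl, hcore⟩⟩
        intro hcon
        apply hne
        apply Fin.ext
        have := congrArg Fin.val hcon
        simp only [phiF] at this
        unfold phiN at this
        have hu := u'.isLt
        have hv := v'.isLt
        split at this <;> split at this <;> omega
      · refine ⟨?_, Or.inr (Or.inl ⟨h1, h2⟩)⟩
        intro hcon
        rw [hcon] at h1
        omega
      · refine ⟨?_, Or.inr (Or.inr ⟨h1, h2⟩)⟩
        intro hcon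
        rw [hcon] at h1
        omega
  have hphi_val : ∀ u : Fin (2 * n), (phiF n u).val = phiN n u.val := fun _ => rfl
  have hphiN_ne : ∀ u : Fin (2 * n), phiN n u.val ≠ n ∧ phiN n u.val ≠ n + 1 := by
    intro u
    have := u.isLt
    unfold phiN
    split <;> omega
  constructor
  -- hφinj
  · intro u v h
    have := congrArg Fin.val h
    simp only [hphi_val] at this
    unfold phiN at this
    apply Fin.ext
    split at this <;> split at this <;> omega
  -- hhom
  · intro u v h
    exact (adj_iff _ _).mpr (Or.inl ⟨u, v, rfl, rfl, h⟩)
  -- hback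
  · intro u w h
    rcases (adj_iff _ _).mp h with ⟨u', v', hu, hv, hadj⟩ | ⟨h1, _⟩ | ⟨h1, _⟩
    · have : u = u' := by
        apply Fin.ext
        have := congrArg Fin.val hu
        simp only [hphi_val] at this
        unfold phiN at this
        have h1 := u.isLt
        have h2 := u'.isLt
        split at this <;> split at this <;> omega
      subst this
      exact ⟨v', hv, hadj⟩
    · exact absurd h1 (hphiN_ne u).1
    · exact absurd h1 (hphiN_ne u).2
  -- hedge
  · exact (adj_iff _ _).mpr (Or.inr (Or.inl ⟨rfl, rfl⟩))
  -- hx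
  · intro w h
    rcases (adj_iff _ _).mp h with ⟨u', v', hu, hv, _⟩ | ⟨_, h2⟩ | ⟨h1, _⟩
    · exfalso
      have := congrArg Fin.val hu
      simp only [hphi_val] at this
      exact (hphiN_ne u').1 this.symm
    · exact Fin.ext h2
    · simp at h1
  -- hy
  · intro w h
    rcases (adj_iff _ _).mp h with ⟨u', v', hu, hv, _⟩ | ⟨h1, _⟩ | ⟨_, h2⟩
    · exfalso
      have := congrArg Fin.val hu
      simp only [hphi_val] at this
      exact (hphiN_ne u').2 this.symm
    · simp at h1
    · exact Fin.ext h2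
  -- hφx
  · intro u h
    exact (hphiN_ne u).1 (congrArg Fin.val h)
  -- hφy
  · intro u h
    exact (hphiN_ne u).2 (congrArg Fin.val h)
  -- hcover
  · intro v' h1 h2
    have hne1 : v'.val ≠ n := fun h => h1 (Fin.ext h)
    have hne2 : v'.val ≠ n + 1 := fun h => h2 (Fin.ext h)
    have hlt := v'.isLt
    by_cases hv : v'.val < n
    · exact ⟨⟨v'.val, by omega⟩, Fin.ext (by simp [hphi_val]; unfold phiN; rw [if_pos hv])⟩
    · refine ⟨⟨v'.val - 2, by omega⟩, Fin.ext ?_⟩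
      simp only [hphi_val]
      unfold phiN
      rw [if_neg (by omega)]
      omega
  -- hcomm
  · intro u
    apply Fin.ext
    have := u.isLt
    simp only [hphi_val, sigmaRefl]
    unfold phiN
    split <;> split <;> omega
  -- hσx
  · apply Fin.ext
    simp only [sigmaRefl]
    omega
  -- hσy
  · apply Fin.ext
    simp only [sigmaRefl]
    omega

end step


section final

variable {n k : ℕ} {a b : List ℕ}

lemma topIndex_step (hk : 1 ≤ k) (hkn : k ≤ n) (ha : IsComposition a) (hb : IsComposition b)
    (has : a.sum + k = n) (hbs : b.sum = n) :
    topIndex (n + 1) a (b ++ [1]) = topIndex n a b := by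
  have D := extData hk hkn ha hb has hbs
  have h1 : numCycles (meanderC (n + 1) a (b ++ [1])) = numCycles (meanderC n a b) :=
    D.numCycles_eq
  have h2 : numNonStableSegments (n + 1) a (b ++ [1]) = numNonStableSegments n a b :=
    D.numNonStable_eq
  rw [topIndex, topIndex, h1, h2]

lemma isComposition_append_one (hb : IsComposition b) : IsComposition (b ++ [1]) := by
  intro x hx
  rcases List.mem_append.mp hx with h | h
  · exact hb x h
  · simp at h; omega

lemma frob_step (hd : FrobDatum n k a b) (h1 : a.sum + k = n) (h2 : b.sum = n) :
    FrobDatum (n + 1) (k + 1) a (b ++ [1]) := by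
  obtain ⟨ha, hb, hk, hkn, _, htop⟩ := hd
  refine ⟨ha, isComposition_append_one hb, by omega, by omega,
    Or.inl ⟨by omega, by simp [h2]⟩, ?_⟩
  rw [topIndex_step hk hkn ha hb h1 h2, htop]

lemma meanderC_comm (n : ℕ) (a b : List ℕ) : meanderC n a b = meanderC n b a := by
  ext u v
  rw [meanderC_adj, meanderC_adj]
  constructor <;> rintro ⟨h1, h2⟩ <;> exact ⟨h1, by tauto⟩

lemma topIndex_comm (n : ℕ) (a b : List ℕ) : topIndex n a b = topIndex n b a := by
  have h : meanderC n a b = meanderC n b a := meanderC_comm n a b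
  unfold topIndex numCycles numNonStableSegments
  rw [h]

lemma frobDatum_comm (hd : FrobDatum n k a b) : FrobDatum n k b a := by
  obtain ⟨ha, hb, hk, hkn, hsum, htop⟩ := hd
  exact ⟨hb, ha, hk, hkn, by tauto, by rw [topIndex_comm n b a]; exact htop⟩

/-- The pre-Sym2 version of the injection map. -/
def gpair (n : ℕ) (a b : List ℕ) : Sym2 (List ℕ) :=
  if b.sum = n ∧ ¬ a.sum = n then s(a, b ++ [1])
  else if a.sum = n ∧ ¬ b.sum = n then s(b, a ++ [1])
  else s(a, b)

lemma gpair_symm (n : ℕ) (x y : List ℕ) : gpair n x y = gpair n y x := by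
  unfold gpair
  split_ifs <;> first | rfl | tauto | exact Sym2.eq_swap

/-- The injection map on unordered pairs. -/
def gmap (n : ℕ) : Sym2 (List ℕ) → Sym2 (List ℕ) :=
  Sym2.lift ⟨fun a b => gpair n a b, gpair_symm n⟩

lemma gmap_mk (n : ℕ) (a b : List ℕ) : gmap n s(a, b) = gpair n a b := rfl

lemma hcanon {s : Sym2 (List ℕ)} (hs : s ∈ FSet n k) :
    ∃ a b, s = s(a, b) ∧ FrobDatum n k a b ∧ a.sum + k = n ∧ b.sum = n ∧
      gmap n s = s(a, b ++ [1]) ∧ FrobDatum (n + 1) (k + 1) a (b ++ [1]) := by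
  obtain ⟨a, b, rfl, hd⟩ := hs
  have hk := hd.2.2.1
  have hkn := hd.2.2.2.1
  rcases hd.2.2.2.2.1 with ⟨h1, h2⟩ | ⟨h1, h2⟩
  · have ha1 : a.sum + k = n := by omega
    refine ⟨a, b, rfl, hd, ha1, h2, ?_, frob_step hd ha1 h2⟩
    rw [gmap_mk, gpair, if_pos ⟨h2, by omega⟩]
  · have hd' : FrobDatum n k b a := frobDatum_comm hd
    have hb1 : b.sum + k = n := by omega
    refine ⟨b, a, Sym2.eq_swap, hd', hb1, h2, ?_, frob_step hd' hb1 h2⟩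
    rw [gmap_mk, gpair, if_neg (by omega), if_pos ⟨h2, by omega⟩]

/-- For every `n ≥ 1` and `k ≥ 1` there is an injection `F_{n,k} ↪ F_{n+1,k+1}`. -/
theorem FSet_injection (n k : ℕ) (hn : 1 ≤ n) (hk : 1 ≤ k) :
    ∃ f : FSet n k → FSet (n + 1) (k + 1), Function.Injective f := by
  refine ⟨fun x => ⟨gmap n x.1, ?_⟩, ?_⟩
  · obtain ⟨a, b, hs, hd, ha1, hb1, hg, hfd⟩ := hcanon x.2
    exact ⟨a, b ++ [1], hg, hfd⟩
  · intro x y hxy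
    obtain ⟨a₁, b₁, hs₁, hd₁, ha₁, hb₁, hg₁, _⟩ := hcanon x.2
    obtain ⟨a₂, b₂, hs₂, hd₂, ha₂, hb₂, hg₂, _⟩ := hcanon y.2
    have h' : gmap n x.1 = gmap n y.1 := congrArg Subtype.val hxy
    rw [hg₁, hg₂] at h'
    apply Subtype.ext
    rcases Sym2.eq_iff.mp h' with ⟨hA, hB⟩ | ⟨hA, hB⟩
    · have hBB : b₁ = b₂ := by
        have := congrArg List.dropLast hB
        simpa using this
      rw [hs₁, hs₂, hA, hBB]
    · exfalso
      have hA' : a₁.sum = b₂.sum + 1 := by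
        simpa using congrArg List.sum hA
      omega
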